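/- arXiv:1705.01601 — 2 statements merged into one kernel-verified Lean document; each statement's English description precedes it below -/
import Mathlib

section
/- Equivalently in scalar form: if X ⊂ ℝ^N is partitioned into Y₁, Y₂ with positive definite sample covariances Σ₁, Σ₂ and p = |Y₁|/|X|, then (det Σ₁)^p · (det Σ₂)^(1−p) ≤ det Σ_X. -/
open Matrix

noncomputable def sampleMean {N : ℕ} (S : Finset (Fin N → ℝ)) : Fin N → ℝ :=
  (S.card : ℝ)⁻¹ • ∑ x ∈ S, x

noncomputable def sampleCov {N : ℕ} (S : Finset (Fin N → ℝ)) : Matrix (Fin N) (Fin N) ℝ :=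
  (S.card : ℝ)⁻¹ • ∑ x ∈ S, vecMulVec (x - sampleMean S) (x - sampleMean S)

set_option linter.unusedSectionVars false

section Helpers

open Finset

variable {n : Type*} [Fintype n] [DecidableEq n]

lemma posSemidef_vecMulVec_self (v : n → ℝ) : (vecMulVec v v).PosSemidef := by
  refine Matrix.PosSemidef.of_dotProduct_mulVec_nonneg ?_ ?_
  · show _ = _
    ext i j
    simp [conjTranspose_apply, vecMulVec_apply, mul_comm]
  · intro x
    have h : (vecMulVec v v) *ᵥ x = (v ⬝ᵥ x) • v := by
      ext i
      simp only [mulVec, vecMulVec_apply, dotProduct, Pi.smul_apply, smul_eq_mul,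
        Finset.sum_mul]
      exact Finset.sum_congr rfl fun j _ => by ring
    rw [h]
    simp only [star_trivial, dotProduct_smul, smul_eq_mul]
    rw [dotProduct_comm]
    exact mul_self_nonneg _

lemma isHermitian_smul_real {A : Matrix n n ℝ} (hA : A.IsHermitian) (c : ℝ) :
    (c • A).IsHermitian := by
  show _ = _
  rw [conjTranspose_smul, star_trivial, hA.eq]

lemma Matrix.PosSemidef.smul_real {A : Matrix n n ℝ} (hA : A.PosSemidef) {c : ℝ} (hc : 0 ≤ c) :
    (c • A).PosSemidef := by
  refine .of_dotProduct_mulVec_nonneg (isHermitian_smul_real hA.1 c) fun x => ?_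
  simp only [star_trivial, smul_mulVec, dotProduct_smul, smul_eq_mul]
  exact mul_nonneg hc (by simpa using hA.dotProduct_mulVec_nonneg x)

lemma Matrix.PosDef.smul_real {A : Matrix n n ℝ} (hA : A.PosDef) {c : ℝ} (hc : 0 < c) :
    (c • A).PosDef := by
  refine .of_dotProduct_mulVec_pos (isHermitian_smul_real hA.1 c) fun x hx => ?_
  simp only [star_trivial, smul_mulVec, dotProduct_smul, smul_eq_mul]
  exact mul_pos hc (by simpa using hA.dotProduct_mulVec_pos hx)

lemma one_le_det_one_add {C : Matrix n n ℝ} (hC : C.PosSemidef) :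
    1 ≤ (1 + C).det := by
  set U : Matrix n n ℝ := (hC.1.eigenvectorUnitary : Matrix n n ℝ) with hUdef
  have hU : U * star U = 1 := mem_unitaryGroup_iff.mp hC.1.eigenvectorUnitary.2
  have key : 1 + C = U * (1 + diagonal (RCLike.ofReal ∘ hC.1.eigenvalues)) * star U := by
    rw [Matrix.mul_add, Matrix.add_mul, Matrix.mul_one, hU]
    conv_lhs => rw [hC.1.spectral_theorem, Unitary.conjStarAlgAut_apply]
  rw [key, det_mul_right_comm, hU, one_mul]
  have h2 : (1 : Matrix n n ℝ) + diagonal (RCLike.ofReal ∘ hC.1.eigenvalues)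
      = diagonal (fun i => 1 + hC.1.eigenvalues i) := by
    rw [← diagonal_one, diagonal_add]
    rfl
  rw [h2, det_diagonal]
  calc (1:ℝ) = ∏ _i : n, (1:ℝ) := by simp
  _ ≤ ∏ i, (1 + hC.1.eigenvalues i) := Finset.prod_le_prod (by simp)
      (fun i _ => by linarith [hC.eigenvalues_nonneg i])

lemma det_rpow_le_det_smul_one_add_smul {A : Matrix n n ℝ} (hA : A.PosDef)
    {p q : ℝ} (hp : 0 ≤ p) (hq : 0 ≤ q) (hpq : p + q = 1) :
    A.det ^ q ≤ (p • (1 : Matrix n n ℝ) + q • A).det := by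
  set U : Matrix n n ℝ := (hA.1.eigenvectorUnitary : Matrix n n ℝ) with hUdef
  have hU : U * star U = 1 := mem_unitaryGroup_iff.mp hA.1.eigenvectorUnitary.2
  have key : p • (1 : Matrix n n ℝ) + q • A
      = U * (diagonal (fun i => p + q * hA.1.eigenvalues i)) * star U := by
    have hd : diagonal (fun i => p + q * hA.1.eigenvalues i)
        = p • (1 : Matrix n n ℝ) + q • diagonal (RCLike.ofReal ∘ hA.1.eigenvalues) := by
      ext i j
      rcases eq_or_ne i j with h | h
      · subst h; simp [Matrix.one_apply]
      · simp [diagonal_apply_ne _ h, Matrix.one_apply_ne h]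
    rw [hd, Matrix.mul_add, Matrix.add_mul]
    congr 1
    · rw [Matrix.mul_smul, smul_mul_assoc, Matrix.mul_one, hU]
    · rw [Matrix.mul_smul, smul_mul_assoc]
      conv_lhs => rw [hA.1.spectral_theorem, Unitary.conjStarAlgAut_apply]
  rw [key, det_mul_right_comm, hU, one_mul, det_diagonal]
  have hdet : A.det = ∏ i, hA.1.eigenvalues i := by
    rw [hA.1.det_eq_prod_eigenvalues]
    norm_num
  rw [hdet, ← Real.finset_prod_rpow _ _ (fun i _ => (hA.eigenvalues_pos i).le)]
  refine Finset.prod_le_prod (fun i _ => Real.rpow_nonneg (hA.eigenvalues_pos i).le q)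
    (fun i _ => ?_)
  have := Real.geom_mean_le_arith_mean2_weighted hp hq zero_le_one
    (hA.eigenvalues_pos i).le hpq
  simpa [Real.one_rpow] using this

lemma posDef_conj {B M : Matrix n n ℝ} (hB : B.PosDef) (hM : IsUnit M.det)
    (hHerm : M.IsHermitian) : (M * B * M).PosDef := by
  refine Matrix.PosDef.of_dotProduct_mulVec_pos ?_ ?_
  · show _ = _
    calc (M * B * M)ᴴ = Mᴴ * Bᴴ * Mᴴ := by
          rw [conjTranspose_mul, conjTranspose_mul, mul_assoc]
    _ = M * B * M := by rw [hHerm.eq, hB.1.eq]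
  · intro x hx
    have hy : M *ᵥ x ≠ 0 := by
      intro h
      exact hx ((Matrix.mulVec_injective_iff_isUnit.mpr
        ((Matrix.isUnit_iff_isUnit_det M).mpr hM)).eq_iff.mp (by rw [h, mulVec_zero]))
    have hrw : star x ⬝ᵥ (M * B * M) *ᵥ x = star (M *ᵥ x) ⬝ᵥ B *ᵥ (M *ᵥ x) := by
      rw [← mulVec_mulVec, ← mulVec_mulVec, dotProduct_mulVec,
        show star x ᵥ* M = star (M *ᵥ x) from by rw [star_mulVec, hHerm.eq]]
    rw [hrw]
    exact hB.dotProduct_mulVec_pos hy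

open scoped MatrixOrder in
lemma sqrt_facts {A : Matrix n n ℝ} (hA : A.PosDef) :
    ∃ S : Matrix n n ℝ, S.IsHermitian ∧ S * S = A ∧ IsUnit S.det ∧
      S⁻¹.IsHermitian ∧ S * S⁻¹ = 1 ∧ S⁻¹ * S = 1 ∧ S.det * S.det = A.det := by
  have hsq : CFC.sqrt A * CFC.sqrt A = A := CFC.sqrt_mul_sqrt_self A hA.posSemidef.nonneg
  have hsH : (CFC.sqrt A).IsHermitian := (CFC.sqrt_nonneg A).posSemidef.1
  have hdet : (CFC.sqrt A).det * (CFC.sqrt A).det = A.det := by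
    rw [← det_mul, hsq]
  have hu : IsUnit (CFC.sqrt A).det :=
    isUnit_of_mul_isUnit_left (hdet ▸ hA.det_pos.ne'.isUnit)
  refine ⟨CFC.sqrt A, hsH, hsq,
    hu, ?_, mul_nonsing_inv _ hu, nonsing_inv_mul _ hu, hdet⟩
  show _ = _
  rw [conjTranspose_nonsing_inv, hsH.eq]

lemma det_le_det_add_posSemidef {M R : Matrix n n ℝ} (hM : M.PosDef) (hR : R.PosSemidef) :
    M.det ≤ (M + R).det := by
  obtain ⟨S, hSH, hSS, hSu, hSiH, hSr, hSl, hSdet⟩ := sqrt_facts hM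
  set C : Matrix n n ℝ := S⁻¹ * R * S⁻¹ with hC
  have hCpsd : C.PosSemidef := by
    have := hR.mul_mul_conjTranspose_same S⁻¹
    rwa [hSiH.eq] at this
  have key : M + R = S * (1 + C) * S := by
    rw [Matrix.mul_add, Matrix.add_mul, Matrix.mul_one, hSS, hC]
    congr 1
    have hRe : S * (S⁻¹ * R * S⁻¹) * S = S * S⁻¹ * R * (S⁻¹ * S) := by
      simp only [Matrix.mul_assoc]
    rw [hRe, hSr, hSl, Matrix.one_mul, Matrix.mul_one]
  have hd : (M + R).det = M.det * (1 + C).det := by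
    rw [key, det_mul, det_mul, ← hSdet]; ring
  calc M.det = M.det * 1 := (mul_one _).symm
  _ ≤ M.det * (1 + C).det :=
      mul_le_mul_of_nonneg_left (one_le_det_one_add hCpsd) hM.det_pos.le
  _ = (M + R).det := hd.symm

lemma det_rpow_mul_det_rpow_le {A B : Matrix n n ℝ} (hA : A.PosDef) (hB : B.PosDef)
    {p q : ℝ} (hp : 0 ≤ p) (hq : 0 ≤ q) (hpq : p + q = 1) :
    A.det ^ p * B.det ^ q ≤ (p • A + q • B).det := by
  obtain ⟨S, hSH, hSS, hSu, hSiH, hSr, hSl, hSdet⟩ := sqrt_facts hA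
  have hSiu : IsUnit S⁻¹.det := by
    rw [det_nonsing_inv, Ring.inverse_eq_inv']
    exact hSu.inv
  set C : Matrix n n ℝ := S⁻¹ * B * S⁻¹ with hC
  have hCpd : C.PosDef := posDef_conj hB hSiu hSiH
  have key : p • A + q • B = S * (p • (1 : Matrix n n ℝ) + q • C) * S := by
    rw [Matrix.mul_add, Matrix.add_mul]
    congr 1
    · rw [Matrix.mul_smul, smul_mul_assoc, Matrix.mul_one, hSS]
    · rw [Matrix.mul_smul, smul_mul_assoc, hC]
      congr 1
      have hRe : S * (S⁻¹ * B * S⁻¹) * S = S * S⁻¹ * B * (S⁻¹ * S) := by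
        simp only [Matrix.mul_assoc]
      rw [hRe, hSr, hSl, Matrix.one_mul, Matrix.mul_one]
  have hdetC : C.det = B.det / A.det := by
    rw [hC, det_mul, det_mul, det_nonsing_inv, Ring.inverse_eq_inv', ← hSdet]
    field_simp [hSu.ne_zero]
  have hd : (p • A + q • B).det = A.det * (p • (1 : Matrix n n ℝ) + q • C).det := by
    rw [key, det_mul, det_mul, ← hSdet]; ring
  have h1 : A.det * C.det ^ q ≤ (p • A + q • B).det := by
    rw [hd]
    exact mul_le_mul_of_nonneg_left (det_rpow_le_det_smul_one_add_smul hCpd hp hq hpq)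
      hA.det_pos.le
  refine le_trans (le_of_eq ?_) h1
  rw [hdetC, Real.div_rpow hB.det_pos.le hA.det_pos.le]
  rw [show p = 1 - q by linarith, Real.rpow_sub hA.det_pos, Real.rpow_one]
  field_simp

lemma sum_sub_sampleMean {N : ℕ} (S : Finset (Fin N → ℝ)) (hS : S.Nonempty) (i : Fin N) :
    ∑ x ∈ S, (x i - sampleMean S i) = 0 := by
  have hc : (S.card : ℝ) ≠ 0 := by
    exact_mod_cast Nat.cast_ne_zero.mpr (Finset.card_ne_zero_of_mem hS.choose_spec)
  simp only [Finset.sum_sub_distrib, Finset.sum_const, nsmul_eq_mul, sampleMean,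
    Pi.smul_apply, Finset.sum_apply, smul_eq_mul]
  field_simp
  ring

lemma sum_vecMulVec_eq {N : ℕ} (S : Finset (Fin N → ℝ)) (hS : S.Nonempty) (m : Fin N → ℝ) :
    ∑ x ∈ S, vecMulVec (x - m) (x - m)
      = (S.card : ℝ) • sampleCov S
        + (S.card : ℝ) • vecMulVec (sampleMean S - m) (sampleMean S - m) := by
  have hc : (S.card : ℝ) ≠ 0 := by
    exact_mod_cast Nat.cast_ne_zero.mpr (Finset.card_ne_zero_of_mem hS.choose_spec)
  ext i j
  have expand : ∀ x ∈ S, (x i - m i) * (x j - m j)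
      = (x i - sampleMean S i) * (x j - sampleMean S j)
        + (sampleMean S i - m i) * (x j - sampleMean S j)
        + (x i - sampleMean S i) * (sampleMean S j - m j)
        + (sampleMean S i - m i) * (sampleMean S j - m j) := fun x _ => by ring
  simp only [Matrix.sum_apply, vecMulVec_apply, Pi.sub_apply, Matrix.add_apply,
    Matrix.smul_apply, smul_eq_mul, sampleCov]
  rw [Finset.sum_congr rfl expand]
  simp only [Finset.sum_add_distrib, ← Finset.mul_sum, ← Finset.sum_mul,
    Finset.sum_const, nsmul_eq_mul]
  rw [sum_sub_sampleMean S hS i, sum_sub_sampleMean S hS j]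
  field_simp
  ring

end Helpers

theorem det_cov_geometric_mean_le {N : ℕ} (Y₁ Y₂ : Finset (Fin N → ℝ))
    (h₁ : Y₁.Nonempty) (h₂ : Y₂.Nonempty) (hdisj : Disjoint Y₁ Y₂)
    (X : Finset (Fin N → ℝ)) (hX : X = Y₁ ∪ Y₂)
    (hc₁ : (sampleCov Y₁).PosDef) (hc₂ : (sampleCov Y₂).PosDef)
    (p : ℝ) (hp : p = (Y₁.card : ℝ) / X.card) :
    (sampleCov Y₁).det ^ p * (sampleCov Y₂).det ^ (1 - p) ≤ (sampleCov X).det := by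
  have hc0 : (0:ℝ) < Y₁.card := by exact_mod_cast Finset.card_pos.mpr h₁
  have hc0' : (0:ℝ) < Y₂.card := by exact_mod_cast Finset.card_pos.mpr h₂
  have hXcard : (X.card : ℝ) = (Y₁.card : ℝ) + Y₂.card := by
    rw [hX, Finset.card_union_of_disjoint hdisj]
    push_cast
    ring
  have hXpos : (0:ℝ) < X.card := by rw [hXcard]; linarith
  set q : ℝ := 1 - p with hqdef
  have hp0 : 0 < p := by rw [hp]; positivity
  have hq_eq : q = (Y₂.card : ℝ) / X.card := by
    rw [hqdef, hp]
    field_simp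
    linarith [hXcard]
  have hq0 : 0 < q := by rw [hq_eq]; positivity
  have hpq : p + q = 1 := by rw [hqdef]; ring
  set μ := sampleMean X with hμ
  set V₁ := vecMulVec (sampleMean Y₁ - μ) (sampleMean Y₁ - μ) with hV₁
  set V₂ := vecMulVec (sampleMean Y₂ - μ) (sampleMean Y₂ - μ) with hV₂
  have hsum : sampleCov X = (p • sampleCov Y₁ + q • sampleCov Y₂) + (p • V₁ + q • V₂) := by
    have hsplit : ∑ x ∈ X, vecMulVec (x - μ) (x - μ)
        = ∑ x ∈ Y₁, vecMulVec (x - μ) (x - μ) + ∑ x ∈ Y₂, vecMulVec (x - μ) (x - μ) := by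
      rw [hX]
      exact Finset.sum_union hdisj
    have h1 := sum_vecMulVec_eq Y₁ h₁ μ
    have h2 := sum_vecMulVec_eq Y₂ h₂ μ
    have e1 : (X.card:ℝ)⁻¹ * Y₁.card = p := by rw [hp, inv_mul_eq_div]
    have e2 : (X.card:ℝ)⁻¹ * Y₂.card = q := by rw [hq_eq, inv_mul_eq_div]
    calc sampleCov X = (X.card : ℝ)⁻¹ • ∑ x ∈ X, vecMulVec (x - μ) (x - μ) := rfl
    _ = (X.card : ℝ)⁻¹ • (((Y₁.card : ℝ) • sampleCov Y₁ + (Y₁.card : ℝ) • V₁)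
          + ((Y₂.card : ℝ) • sampleCov Y₂ + (Y₂.card : ℝ) • V₂)) := by
        rw [hsplit, h1, h2]
    _ = (p • sampleCov Y₁ + q • sampleCov Y₂) + (p • V₁ + q • V₂) := by
        rw [smul_add, smul_add, smul_add, smul_smul, smul_smul, smul_smul, smul_smul,
          e1, e2]
        abel
  have hMpd : (p • sampleCov Y₁ + q • sampleCov Y₂).PosDef :=
    (hc₁.smul_real hp0).add (hc₂.smul_real hq0)
  have hRpsd : (p • V₁ + q • V₂).PosSemidef :=
    ((posSemidef_vecMulVec_self _).smul_real hp0.le).add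
      ((posSemidef_vecMulVec_self _).smul_real hq0.le)
  calc (sampleCov Y₁).det ^ p * (sampleCov Y₂).det ^ (1 - p)
      = (sampleCov Y₁).det ^ p * (sampleCov Y₂).det ^ q := by rw [hqdef]
  _ ≤ (p • sampleCov Y₁ + q • sampleCov Y₂).det :=
      det_rpow_mul_det_rpow_le hc₁ hc₂ hp0.le hq0.le hpq
  _ ≤ ((p • sampleCov Y₁ + q • sampleCov Y₂) + (p • V₁ + q • V₂)).det :=
      det_le_det_add_posSemidef hMpd hRpsd
  _ = (sampleCov X).det := by rw [← hsum]
end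

section
/- Theorem (β = 1 favors splitting): let X ⊂ ℝ^N be a finite data set, X_ℓ ⊆ X partitioned into Z, and Y = {Y₁,…,Y_k} a proportional coarsening of Z with positive definite sample covariances Σᵢ. Then for any coarsening Ỹ of Y, E₁(Ỹ) ≥ E₁(Y), where E₁(P) = H(P) + Σ_{P_r∈P} (|P_r|/|X|)·H(N(μ_{P_r},Σ_{P_r})) + H(Z|P). -/
open Matrix

/-- Differential entropy of the Gaussian `N(μ, Σ)`. -/
noncomputable def gaussEntropy (N : ℕ) (S : Matrix (Fin N) (Fin N) ℝ) : ℝ :=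
  (N : ℝ) / 2 * Real.log (2 * Real.pi * Real.exp 1) + 1 / 2 * Real.log S.det

/-- Entropy of a partition `Y` of a finite set `X`, with empirical probabilities. -/
noncomputable def partEntropy {α : Type*} (X : Finset α) {k : ℕ} (Y : Fin k → Finset α) : ℝ :=
  -∑ i, ((Y i).card : ℝ) / X.card * Real.log (((Y i).card : ℝ) / X.card)

/-- Conditional entropy `H(Z|Y) = Σᵢ (|Yᵢ|/|X|)·H(Z | Yᵢ ∩ X_ℓ)`. -/
noncomputable def condEntropy {α : Type*} [DecidableEq α] (X Xl : Finset α)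
    {k m : ℕ} (Y : Fin k → Finset α) (Z : Fin m → Finset α) : ℝ :=
  ∑ i, ((Y i).card : ℝ) / X.card *
    (-∑ j, ((Y i ∩ Z j).card : ℝ) / ((Y i ∩ Xl).card) *
        Real.log (((Y i ∩ Z j).card : ℝ) / ((Y i ∩ Xl).card)))

/-- The CEC-IB cost `E_β` of a partition `Y` of the data set `X` with
side information `Z` partitioning `Xl ⊆ X`. -/
noncomputable def cecib {N : ℕ} (β : ℝ) (X Xl : Finset (Fin N → ℝ))
    {k m : ℕ} (Y : Fin k → Finset (Fin N → ℝ)) (Z : Fin m → Finset (Fin N → ℝ)) : ℝ :=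
  partEntropy X Y + ∑ i, ((Y i).card : ℝ) / X.card * gaussEntropy N (sampleCov (Y i))
    + β * condEntropy X Xl Y Z

section AuxLemmas

variable {N : ℕ}

lemma psd_vecMulVec (v : Fin N → ℝ) : (vecMulVec v v).PosSemidef := by
  refine Matrix.PosSemidef.of_dotProduct_mulVec_nonneg ?_ ?_
  · ext i j
    simp [conjTranspose_apply, vecMulVec_apply, mul_comm]
  · intro x
    have h : vecMulVec v v *ᵥ x = (v ⬝ᵥ x) • v := by
      ext i
      simp only [mulVec, vecMulVec_apply, dotProduct, Pi.smul_apply, smul_eq_mul,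
        Finset.sum_mul, Finset.mul_sum]
      exact Finset.sum_congr rfl fun j _ => by ring
    rw [h, star_trivial, dotProduct_smul]
    have : x ⬝ᵥ v = v ⬝ᵥ x := dotProduct_comm _ _
    rw [smul_eq_mul, this]
    exact mul_self_nonneg _

lemma psd_smul {c : ℝ} (hc : 0 ≤ c) {M : Matrix (Fin N) (Fin N) ℝ} (h : M.PosSemidef) :
    (c • M).PosSemidef := by
  refine Matrix.PosSemidef.of_dotProduct_mulVec_nonneg ?_ ?_
  · rw [IsHermitian, conjTranspose_smul, star_trivial, h.1.eq]
  · intro x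
    rw [smul_mulVec, dotProduct_smul, smul_eq_mul]
    exact mul_nonneg hc (h.dotProduct_mulVec_nonneg x)

lemma pd_smul {c : ℝ} (hc : 0 < c) {M : Matrix (Fin N) (Fin N) ℝ} (h : M.PosDef) :
    (c • M).PosDef := by
  refine Matrix.PosDef.of_dotProduct_mulVec_pos ?_ ?_
  · rw [IsHermitian, conjTranspose_smul, star_trivial, h.1.eq]
  · intro x hx
    rw [smul_mulVec, dotProduct_smul, smul_eq_mul]
    exact mul_pos hc (h.dotProduct_mulVec_pos hx)

lemma psd_sum {ι : Type*} (A : Finset ι) (f : ι → Matrix (Fin N) (Fin N) ℝ)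
    (h : ∀ i ∈ A, (f i).PosSemidef) : (∑ i ∈ A, f i).PosSemidef := by
  classical
  refine Finset.sum_induction f _ (fun a b ha hb => ha.add hb) ?_ h
  exact Matrix.PosSemidef.zero

lemma trace_psd_nonneg {M : Matrix (Fin N) (Fin N) ℝ} (h : M.PosSemidef) : 0 ≤ M.trace := by
  rw [Matrix.trace]
  refine Finset.sum_nonneg fun i _ => ?_
  have := h.dotProduct_mulVec_nonneg (Pi.single i 1)
  simpa [Matrix.diag_apply, dotProduct, mulVec_single, Pi.single_apply] using this

lemma trace_mul_psd_nonneg {P E : Matrix (Fin N) (Fin N) ℝ} (hP : P.PosSemidef)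
    (hE : E.PosSemidef) : 0 ≤ (P * E).trace := by
  obtain ⟨B, hB⟩ : ∃ B : Matrix (Fin N) (Fin N) ℝ, P = Bᴴ * B := by
    open scoped MatrixOrder in
    exact ⟨CFC.sqrt P, by rw [(Matrix.nonneg_iff_posSemidef.mp (CFC.sqrt_nonneg P)).1.eq,
      CFC.sqrt_mul_sqrt_self P hP.nonneg]⟩
  subst hB
  rw [Matrix.mul_assoc, Matrix.trace_mul_comm]
  exact trace_psd_nonneg (hE.mul_mul_conjTranspose_same B)

lemma trace_eq_sum_eigenvalues {M : Matrix (Fin N) (Fin N) ℝ} (hM : M.IsHermitian) :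
    M.trace = ∑ i, hM.eigenvalues i := by
  rw [hM.trace_eq_sum_eigenvalues]
  simp

variable {N : ℕ}

lemma logdet_tangent {C B : Matrix (Fin N) (Fin N) ℝ} (hC : C.PosDef) (hB : B.PosDef) :
    Real.log B.det ≤ Real.log C.det + (C⁻¹ * B).trace - N := by
  have hCs := hC.posSemidef
  obtain ⟨S, hS, hSS⟩ : ∃ S : Matrix (Fin N) (Fin N) ℝ, S.PosSemidef ∧ S * S = C :=
    by open scoped MatrixOrder in
      exact ⟨CFC.sqrt C, Matrix.nonneg_iff_posSemidef.mp (CFC.sqrt_nonneg C),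
        CFC.sqrt_mul_sqrt_self C hCs.nonneg⟩
  have hdetS2 : S.det * S.det = C.det := by rw [← Matrix.det_mul, hSS]
  have hdetC : 0 < C.det := hC.det_pos
  have hdetS : S.det ≠ 0 := by
    intro h; rw [h, mul_zero] at hdetS2; exact hdetC.ne' hdetS2.symm
  have hSinv : S⁻¹.PosSemidef := hS.inv
  have hSinvH : S⁻¹ᴴ = S⁻¹ := hSinv.1.eq
  -- M := S⁻¹ * B * S⁻¹ is positive definite
  set M := S⁻¹ * B * S⁻¹ with hMdef
  have hMvec : ∀ x : Fin N → ℝ, x ≠ 0 → S⁻¹ *ᵥ x ≠ 0 := by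
    intro x hx h
    apply hx
    have : S *ᵥ (S⁻¹ *ᵥ x) = S *ᵥ 0 := by rw [h]
    rwa [Matrix.mulVec_mulVec, Matrix.mul_nonsing_inv S (isUnit_iff_ne_zero.mpr hdetS),
      Matrix.one_mulVec, Matrix.mulVec_zero] at this
  have hM : M.PosDef := by
    refine Matrix.PosDef.of_dotProduct_mulVec_pos ?_ ?_
    · have h := Matrix.isHermitian_conjTranspose_mul_mul S⁻¹ hB.1
      rwa [hSinvH] at h
    · intro x hx
      have h2 := hB.dotProduct_mulVec_pos (hMvec x hx)
      have h3 : dotProduct (star (S⁻¹ *ᵥ x)) (B *ᵥ (S⁻¹ *ᵥ x))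
          = dotProduct (star x) ((S⁻¹ᴴ * B * S⁻¹) *ᵥ x) := by
        simp only [star_mulVec, Matrix.dotProduct_mulVec, Matrix.vecMul_vecMul]
      rw [h3, hSinvH] at h2
      exact h2
  have hMH := hM.1
  -- eigenvalues of M
  have hdetM : M.det = ∏ i, hMH.eigenvalues i := by
    simpa using hMH.det_eq_prod_eigenvalues
  have htraceM : M.trace = ∑ i, hMH.eigenvalues i := by
    rw [hMH.trace_eq_sum_eigenvalues]
    simp
  have heigpos : ∀ i, 0 < hMH.eigenvalues i := hM.eigenvalues_pos
  have hlogdetM : Real.log M.det ≤ M.trace - N := by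
    rw [hdetM, htraceM, Real.log_prod (fun i _ => (heigpos i).ne')]
    have : ∀ i ∈ Finset.univ, Real.log (hMH.eigenvalues i) ≤ hMH.eigenvalues i - 1 :=
      fun i _ => Real.log_le_sub_one_of_pos (heigpos i)
    calc ∑ i, Real.log (hMH.eigenvalues i) ≤ ∑ i, (hMH.eigenvalues i - 1) :=
          Finset.sum_le_sum this
      _ = (∑ i, hMH.eigenvalues i) - N := by
          rw [Finset.sum_sub_distrib]; simp
  -- det M = B.det / C.det
  have hdetM2 : M.det = B.det / C.det := by
    rw [hMdef, Matrix.det_mul, Matrix.det_mul, Matrix.det_nonsing_inv, Ring.inverse_eq_inv', ← hdetS2]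
    field_simp
  -- trace M = trace (C⁻¹ * B)
  have htraceM2 : M.trace = (C⁻¹ * B).trace := by
    rw [hMdef, Matrix.trace_mul_cycle, ← Matrix.mul_inv_rev, hSS]
  have hdetB : 0 < B.det := hB.det_pos
  have : Real.log M.det = Real.log B.det - Real.log C.det := by
    rw [hdetM2, Real.log_div hdetB.ne' hdetC.ne']
  rw [this, htraceM2] at hlogdetM
  linarith

lemma pd_convex_sum {ι : Type*} [DecidableEq ι] (A : Finset ι) (lam : ι → ℝ)
    (f g : ι → Matrix (Fin N) (Fin N) ℝ)
    (hlam : ∀ i ∈ A, 0 ≤ lam i) (hf : ∀ i ∈ A, (f i).PosDef) (hg : ∀ i ∈ A, (g i).PosSemidef)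
    {i0 : ι} (hi0 : i0 ∈ A) (hpos : 0 < lam i0) :
    (∑ i ∈ A, lam i • (f i + g i)).PosDef := by
  rw [← Finset.add_sum_erase _ _ hi0]
  have h1 : (lam i0 • (f i0 + g i0)).PosDef :=
    pd_smul hpos ((hf i0 hi0).add_posSemidef (hg i0 hi0))
  have h2 : (∑ i ∈ A.erase i0, lam i • (f i + g i)).PosSemidef := by
    refine psd_sum _ _ fun i hi => ?_
    have hiA := Finset.mem_of_mem_erase hi
    exact psd_smul (hlam i hiA) (((hf i hiA).add_posSemidef (hg i hiA)).posSemidef)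
  exact h1.add_posSemidef h2

lemma logdet_concave_sum {ι : Type*} [DecidableEq ι] (A : Finset ι) (lam : ι → ℝ)
    (f g : ι → Matrix (Fin N) (Fin N) ℝ)
    (hlam : ∀ i ∈ A, 0 ≤ lam i) (hsum : ∑ i ∈ A, lam i = 1)
    (hf : ∀ i ∈ A, (f i).PosDef) (hg : ∀ i ∈ A, (g i).PosSemidef) :
    ∑ i ∈ A, lam i * Real.log (f i).det
      ≤ Real.log (∑ i ∈ A, lam i • (f i + g i)).det := by
  obtain ⟨i0, hi0, hpos⟩ : ∃ i0 ∈ A, 0 < lam i0 := by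
    by_contra h
    push_neg at h
    have : ∑ i ∈ A, lam i = 0 :=
      Finset.sum_eq_zero fun i hi => le_antisymm (h i hi) (hlam i hi)
    rw [this] at hsum; norm_num at hsum
  set C := ∑ i ∈ A, lam i • (f i + g i) with hCdef
  have hC : C.PosDef := pd_convex_sum A lam f g hlam hf hg hi0 hpos
  have hCinv : C⁻¹.PosDef := hC.inv
  -- C = ∑ lam • f + ∑ lam • g
  have hCsplit : C = (∑ i ∈ A, lam i • f i) + (∑ i ∈ A, lam i • g i) := by
    rw [hCdef, ← Finset.sum_add_distrib]
    exact Finset.sum_congr rfl fun i _ => smul_add _ _ _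
  have hEpsd : (∑ i ∈ A, lam i • g i).PosSemidef :=
    psd_sum _ _ fun i hi => psd_smul (hlam i hi) (hg i hi)
  have htr : ∑ i ∈ A, lam i * (C⁻¹ * f i).trace ≤ (N : ℝ) := by
    have h1 : ∑ i ∈ A, lam i * (C⁻¹ * f i).trace = (C⁻¹ * ∑ i ∈ A, lam i • f i).trace := by
      rw [Finset.mul_sum, Matrix.trace_sum]
      exact Finset.sum_congr rfl fun i _ => by
        rw [Matrix.mul_smul, Matrix.trace_smul, smul_eq_mul]
    have h2 : C⁻¹ * ∑ i ∈ A, lam i • f i = 1 - C⁻¹ * ∑ i ∈ A, lam i • g i := by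
      have : (∑ i ∈ A, lam i • f i) = C - ∑ i ∈ A, lam i • g i := by
        rw [hCsplit]; exact (add_sub_cancel_right _ _).symm
      rw [this, Matrix.mul_sub, Matrix.nonsing_inv_mul C (isUnit_iff_ne_zero.mpr hC.det_pos.ne')]
    have h3 : 0 ≤ (C⁻¹ * ∑ i ∈ A, lam i • g i).trace :=
      trace_mul_psd_nonneg hCinv.posSemidef hEpsd
    rw [h1, h2, Matrix.trace_sub, Matrix.trace_one]
    simp only [Finset.card_univ, Fintype.card_fin]
    linarith
  calc ∑ i ∈ A, lam i * Real.log (f i).det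
      ≤ ∑ i ∈ A, lam i * (Real.log C.det + (C⁻¹ * f i).trace - N) := by
        refine Finset.sum_le_sum fun i hi => ?_
        exact mul_le_mul_of_nonneg_left (logdet_tangent hC (hf i hi)) (hlam i hi)
    _ = Real.log C.det + (∑ i ∈ A, lam i * (C⁻¹ * f i).trace) - N := by
        have : ∀ i ∈ A, lam i * (Real.log C.det + (C⁻¹ * f i).trace - N)
            = lam i * Real.log C.det + lam i * (C⁻¹ * f i).trace - lam i * N := by
          intro i _; ring
        rw [Finset.sum_congr rfl this]
        rw [Finset.sum_sub_distrib, Finset.sum_add_distrib, ← Finset.sum_mul, ← Finset.sum_mul,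
          hsum, one_mul, one_mul]
    _ ≤ Real.log C.det := by linarith

lemma sum_vv (S : Finset (Fin N → ℝ)) (μ : Fin N → ℝ) :
    ∑ x ∈ S, vecMulVec (x - μ) (x - μ)
      = (S.card : ℝ) • sampleCov S
        + (S.card : ℝ) • vecMulVec (sampleMean S - μ) (sampleMean S - μ) := by
  rcases S.eq_empty_or_nonempty with rfl | hne
  · simp
  · have hc : (S.card : ℝ) ≠ 0 := Nat.cast_ne_zero.mpr hne.card_ne_zero
    set m := sampleMean S with hm
    have hmean : ∑ x ∈ S, (x - m) = 0 := by
      rw [Finset.sum_sub_distrib, Finset.sum_const, hm, sampleMean,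
        ← Nat.cast_smul_eq_nsmul ℝ, smul_smul, mul_inv_cancel₀ hc, one_smul, sub_self]
    have key : ∀ x : Fin N → ℝ, vecMulVec (x - μ) (x - μ)
        = vecMulVec (x - m) (x - m) + vecMulVec (x - m) (m - μ)
          + vecMulVec (m - μ) (x - m) + vecMulVec (m - μ) (m - μ) := by
      intro x
      ext i j
      simp only [vecMulVec_apply, Matrix.add_apply, Pi.sub_apply]
      ring
    rw [Finset.sum_congr rfl fun x _ => key x]
    rw [Finset.sum_add_distrib, Finset.sum_add_distrib, Finset.sum_add_distrib]
    have h2 : ∑ x ∈ S, vecMulVec (x - m) (m - μ) = 0 := by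
      have he : ∑ x ∈ S, vecMulVec (x - m) (m - μ)
          = vecMulVec (∑ x ∈ S, (x - m)) (m - μ) := by
        ext i j
        simp only [Matrix.sum_apply, vecMulVec_apply, Finset.sum_apply, Finset.sum_mul]
      rw [he, hmean]
      ext i j
      simp [vecMulVec_apply]
    have h3 : ∑ x ∈ S, vecMulVec (m - μ) (x - m) = 0 := by
      have he : ∑ x ∈ S, vecMulVec (m - μ) (x - m)
          = vecMulVec (m - μ) (∑ x ∈ S, (x - m)) := by
        ext i j
        simp only [Matrix.sum_apply, vecMulVec_apply, Finset.sum_apply, Finset.mul_sum]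
      rw [he, hmean]
      ext i j
      simp [vecMulVec_apply]
    have h1 : ∑ x ∈ S, vecMulVec (x - m) (x - m) = (S.card : ℝ) • sampleCov S := by
      rw [sampleCov, smul_smul, mul_inv_cancel₀ hc, one_smul]
    have h4 : ∑ _x ∈ S, vecMulVec (m - μ) (m - μ)
        = (S.card : ℝ) • vecMulVec (m - μ) (m - μ) := by
      rw [Finset.sum_const, Nat.cast_smul_eq_nsmul]
    rw [h1, h2, h3, h4]
    simp

lemma cov_biUnion {k : ℕ} (A : Finset (Fin k)) (Y : Fin k → Finset (Fin N → ℝ))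
    (hd : (A : Set (Fin k)).PairwiseDisjoint Y)
    (hpos : 0 < (A.biUnion Y).card) :
    sampleCov (A.biUnion Y)
      = ∑ i ∈ A, (((Y i).card : ℝ) / ((A.biUnion Y).card : ℝ)) •
          (sampleCov (Y i)
            + vecMulVec (sampleMean (Y i) - sampleMean (A.biUnion Y))
                (sampleMean (Y i) - sampleMean (A.biUnion Y))) := by
  set U := A.biUnion Y with hU
  have hc : (U.card : ℝ) ≠ 0 := Nat.cast_ne_zero.mpr hpos.ne'
  have h1 : sampleCov U
      = (U.card : ℝ)⁻¹ • ∑ i ∈ A, ∑ x ∈ Y i,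
          vecMulVec (x - sampleMean U) (x - sampleMean U) := by
    rw [sampleCov, Finset.sum_biUnion hd]
  rw [h1, Finset.sum_congr rfl fun i _ => sum_vv (Y i) (sampleMean U)]
  rw [Finset.smul_sum]
  refine Finset.sum_congr rfl fun i _ => ?_
  rw [← smul_add, smul_smul]
  congr 1
  rw [div_eq_inv_mul]

lemma block_logdet {k : ℕ} {Xc : ℝ} (hXc : 0 < Xc) (A : Finset (Fin k))
    (Y : Fin k → Finset (Fin N → ℝ))
    (hd : (A : Set (Fin k)).PairwiseDisjoint Y)
    (hpd : ∀ i, (sampleCov (Y i)).PosDef) :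
    ∑ i ∈ A, ((Y i).card : ℝ) / Xc * Real.log (sampleCov (Y i)).det
      ≤ ((A.biUnion Y).card : ℝ) / Xc * Real.log (sampleCov (A.biUnion Y)).det := by
  set U := A.biUnion Y with hU
  rcases Nat.eq_zero_or_pos U.card with h0 | hpos
  · have hYi : ∀ i ∈ A, (Y i).card = 0 := by
      intro i hi
      have hsub : Y i ⊆ U := Finset.subset_biUnion_of_mem Y hi
      exact Nat.le_zero.mp (h0 ▸ Finset.card_le_card hsub)
    rw [h0]
    rw [Finset.sum_congr rfl fun i hi => by rw [hYi i hi]]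
    simp
  · have hcU : (0:ℝ) < (U.card : ℝ) := by exact_mod_cast hpos
    set lam := fun i => ((Y i).card : ℝ) / (U.card : ℝ) with hlamdef
    have hlam : ∀ i ∈ A, 0 ≤ lam i := fun i _ => by positivity
    have hcards : ∑ i ∈ A, ((Y i).card : ℝ) = (U.card : ℝ) := by
      rw [hU, Finset.card_biUnion (fun i hi j hj hne => hd hi hj hne)]
      push_cast
      rfl
    have hsum : ∑ i ∈ A, lam i = 1 := by
      rw [hlamdef, ← Finset.sum_div, hcards, div_self hcU.ne']
    have hkey := logdet_concave_sum A lam (fun i => sampleCov (Y i))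
      (fun i => vecMulVec (sampleMean (Y i) - sampleMean U) (sampleMean (Y i) - sampleMean U))
      hlam hsum (fun i _ => hpd i) (fun i _ => psd_vecMulVec _)
    rw [← cov_biUnion A Y hd hpos] at hkey
    have hW : (0:ℝ) ≤ (U.card : ℝ) / Xc := by positivity
    have hmul := mul_le_mul_of_nonneg_left hkey hW
    have hL : ((U.card : ℝ) / Xc) * ∑ i ∈ A, lam i * Real.log (sampleCov (Y i)).det
        = ∑ i ∈ A, ((Y i).card : ℝ) / Xc * Real.log (sampleCov (Y i)).det := by
      rw [Finset.mul_sum]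
      refine Finset.sum_congr rfl fun i _ => ?_
      rw [hlamdef]
      field_simp
    rw [hL] at hmul
    exact hmul

lemma entropy_inv {α : Type*} [DecidableEq α] (X Xl : Finset α) (hXl : Xl.Nonempty)
    {k m : ℕ} (Y : Fin k → Finset α) (Z : Fin m → Finset α)
    (hYd : ∀ i i', i ≠ i' → Disjoint (Y i) (Y i'))
    (hZd : ∀ j j', j ≠ j' → Disjoint (Z j) (Z j'))
    (hZu : Finset.univ.biUnion Z = Xl)
    (hcoarse : ∀ j, ∃ i, Z j ⊆ Y i)
    (hprop : ∀ i, ((Y i).card : ℝ) / X.card = ((Y i ∩ Xl).card : ℝ) / Xl.card) :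
    partEntropy X Y + condEntropy X Xl Y Z
      = -∑ j, ((Z j).card : ℝ) / Xl.card * Real.log (((Z j).card : ℝ) / Xl.card) := by
  have hL : (0:ℝ) < (Xl.card : ℝ) := by
    exact_mod_cast Finset.card_pos.mpr hXl
  have hZsub : ∀ j, Z j ⊆ Xl := fun j => hZu ▸ Finset.subset_biUnion_of_mem Z (Finset.mem_univ j)
  have hcle : ∀ i j, (Y i ∩ Z j).card ≤ (Y i ∩ Xl).card := fun i j =>
    Finset.card_le_card (Finset.inter_subset_inter_left (hZsub j))
  have hsumc : ∀ i, ∑ j, ((Y i ∩ Z j).card : ℝ) = ((Y i ∩ Xl).card : ℝ) := by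
    intro i
    have hsplit : Y i ∩ Xl = Finset.univ.biUnion (fun j => Y i ∩ Z j) := by
      rw [← hZu]
      ext x
      simp only [Finset.mem_inter, Finset.mem_biUnion, Finset.mem_univ, true_and]
      tauto
    rw [hsplit, Finset.card_biUnion (fun j _ j' _ hne =>
      (hZd j j' hne).mono Finset.inter_subset_right Finset.inter_subset_right)]
    push_cast
    rfl
  have e1 : partEntropy X Y = -∑ i, ∑ j, ((Y i ∩ Z j).card : ℝ) / Xl.card
      * Real.log (((Y i ∩ Xl).card : ℝ) / Xl.card) := by
    rw [partEntropy]
    congr 1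
    refine Finset.sum_congr rfl fun i _ => ?_
    rw [hprop i, ← hsumc i, Finset.sum_div, Finset.sum_mul]
  have e2 : condEntropy X Xl Y Z = -∑ i, ∑ j, ((Y i ∩ Z j).card : ℝ) / Xl.card
      * Real.log (((Y i ∩ Z j).card : ℝ) / ((Y i ∩ Xl).card : ℝ)) := by
    rw [condEntropy, ← Finset.sum_neg_distrib]
    refine Finset.sum_congr rfl fun i _ => ?_
    rw [hprop i, mul_neg, Finset.mul_sum]
    congr 1
    refine Finset.sum_congr rfl fun j _ => ?_
    by_cases ha : ((Y i ∩ Xl).card : ℝ) = 0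
    · have hc0 : ((Y i ∩ Z j).card : ℝ) = 0 := by
        have h1 : (Y i ∩ Xl).card = 0 := by exact_mod_cast ha
        have h2 := hcle i j
        have h3 : (Y i ∩ Z j).card = 0 := by omega
        exact_mod_cast h3
      rw [ha, hc0]
      simp
    · field_simp
  have e4 : ∀ j, ∑ i, ((Y i ∩ Z j).card : ℝ) / Xl.card
      * Real.log (((Y i ∩ Z j).card : ℝ) / Xl.card)
      = ((Z j).card : ℝ) / Xl.card * Real.log (((Z j).card : ℝ) / Xl.card) := by
    intro j
    obtain ⟨i0, hi0⟩ := hcoarse j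
    rw [Finset.sum_eq_single i0]
    · rw [Finset.inter_eq_right.mpr hi0]
    · intro i _ hne
      have hdisj : Disjoint (Y i) (Z j) := (hYd i i0 hne).mono_right hi0
      rw [Finset.disjoint_iff_inter_eq_empty.mp hdisj]
      simp
    · intro h
      exact absurd (Finset.mem_univ i0) h
  rw [e1, e2, ← neg_add, ← Finset.sum_add_distrib]
  rw [Finset.sum_congr rfl fun i _ => (Finset.sum_add_distrib).symm]
  have e3 : ∀ (i : Fin k) (j : Fin m), ((Y i ∩ Z j).card : ℝ) / Xl.card
        * Real.log (((Y i ∩ Xl).card : ℝ) / Xl.card)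
      + ((Y i ∩ Z j).card : ℝ) / Xl.card
        * Real.log (((Y i ∩ Z j).card : ℝ) / ((Y i ∩ Xl).card : ℝ))
      = ((Y i ∩ Z j).card : ℝ) / Xl.card * Real.log (((Y i ∩ Z j).card : ℝ) / Xl.card) := by
    intro i j
    by_cases hc0 : ((Y i ∩ Z j).card : ℝ) = 0
    · rw [hc0]
      simp
    · have ha0 : ((Y i ∩ Xl).card : ℝ) ≠ 0 := by
        intro h
        apply hc0
        have h1 : (Y i ∩ Xl).card = 0 := by exact_mod_cast h
        have h2 := hcle i j
        have h3 : (Y i ∩ Z j).card = 0 := by omega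
        exact_mod_cast h3
      rw [← mul_add, ← Real.log_mul (div_ne_zero ha0 hL.ne') (div_ne_zero hc0 ha0)]
      congr 2
      field_simp
  rw [Finset.sum_congr rfl fun i _ => Finset.sum_congr rfl fun j _ => e3 i j]
  rw [Finset.sum_comm]
  rw [Finset.sum_congr rfl fun j _ => e4 j]

end AuxLemmas

theorem beta_one_favors_splitting {N : ℕ} (X Xl : Finset (Fin N → ℝ))
    (hsub : Xl ⊆ X) (hXl : Xl.Nonempty)
    {k k' m : ℕ} (Y : Fin k → Finset (Fin N → ℝ)) (tY : Fin k' → Finset (Fin N → ℝ))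
    (Z : Fin m → Finset (Fin N → ℝ))
    (hYd : ∀ i i', i ≠ i' → Disjoint (Y i) (Y i'))
    (hYu : Finset.univ.biUnion Y = X)
    (hZd : ∀ j j', j ≠ j' → Disjoint (Z j) (Z j'))
    (hZu : Finset.univ.biUnion Z = Xl)
    -- Y is a coarsening of Z: each Z_j is contained in some Y_i
    (hcoarse : ∀ j, ∃ i, Z j ⊆ Y i)
    -- Y is proportional to Z
    (hprop : ∀ i, ((Y i).card : ℝ) / X.card = ((Y i ∩ Xl).card : ℝ) / Xl.card)
    -- the sample covariance matrices of the clusters are positive definite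
    (hpd : ∀ i, (sampleCov (Y i)).PosDef)
    -- tY is a coarsening of Y, via the merging map g
    (g : Fin k → Fin k')
    (htY : ∀ r, tY r = (Finset.univ.filter (fun i => g i = r)).biUnion Y) :
    cecib 1 X Xl tY Z ≥ cecib 1 X Xl Y Z := by
  have hXne : X.Nonempty := ⟨hXl.choose, hsub hXl.choose_spec⟩
  have hXc : (0:ℝ) < (X.card : ℝ) := by exact_mod_cast Finset.card_pos.mpr hXne
  -- tY is a disjoint partition
  have hYsubtY : ∀ i, Y i ⊆ tY (g i) := fun i => by
    rw [htY]
    exact Finset.subset_biUnion_of_mem Y (by simp)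
  have htYd : ∀ r r', r ≠ r' → Disjoint (tY r) (tY r') := by
    intro r r' hne
    rw [htY r, htY r', Finset.disjoint_left]
    intro x hx hx'
    obtain ⟨i, hi, hxi⟩ := Finset.mem_biUnion.mp hx
    obtain ⟨i', hi', hxi'⟩ := Finset.mem_biUnion.mp hx'
    have hgi : g i = r := (Finset.mem_filter.mp hi).2
    have hgi' : g i' = r' := (Finset.mem_filter.mp hi').2
    have hii' : i ≠ i' := fun h => hne (by rw [← hgi, ← hgi', h])
    exact Finset.disjoint_left.mp (hYd i i' hii') hxi hxi'
  have htcoarse : ∀ j, ∃ r, Z j ⊆ tY r := fun j => by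
    obtain ⟨i, hi⟩ := hcoarse j
    exact ⟨g i, hi.trans (hYsubtY i)⟩
  have hfilterd : ∀ r : Fin k',
      ((Finset.univ.filter (fun i => g i = r) : Finset (Fin k)) :
        Set (Fin k)).PairwiseDisjoint Y :=
    fun r i _ j _ hne => hYd i j hne
  have hcard_tY : ∀ r, ((tY r).card : ℝ)
      = ∑ i ∈ Finset.univ.filter (fun i => g i = r), ((Y i).card : ℝ) := by
    intro r
    rw [htY r, Finset.card_biUnion (fun i hi j hj hne => hYd i j hne)]
    push_cast
    rfl
  have hinter : ∀ r, tY r ∩ Xl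
      = (Finset.univ.filter (fun i => g i = r)).biUnion (fun i => Y i ∩ Xl) := by
    intro r
    rw [htY r]
    ext x
    simp only [Finset.mem_inter, Finset.mem_biUnion]
    tauto
  have hcard_tY_inter : ∀ r, ((tY r ∩ Xl).card : ℝ)
      = ∑ i ∈ Finset.univ.filter (fun i => g i = r), ((Y i ∩ Xl).card : ℝ) := by
    intro r
    rw [hinter r, Finset.card_biUnion (fun i hi j hj hne =>
      (hYd i j hne).mono Finset.inter_subset_left Finset.inter_subset_left)]
    push_cast
    rfl
  have htprop : ∀ r, ((tY r).card : ℝ) / X.card = ((tY r ∩ Xl).card : ℝ) / Xl.card := by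
    intro r
    rw [hcard_tY r, hcard_tY_inter r, Finset.sum_div, Finset.sum_div]
    exact Finset.sum_congr rfl fun i _ => hprop i
  -- Part A : entropy invariance
  have hinv1 := entropy_inv X Xl hXl Y Z hYd hZd hZu hcoarse hprop
  have hinv2 := entropy_inv X Xl hXl tY Z htYd hZd hZu htcoarse htprop
  have hA : partEntropy X tY + condEntropy X Xl tY Z
      = partEntropy X Y + condEntropy X Xl Y Z := by rw [hinv1, hinv2]
  -- Part B : the Gaussian entropy term increases under merging
  have hB : ∑ i, ((Y i).card : ℝ) / X.card * gaussEntropy N (sampleCov (Y i))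
      ≤ ∑ r, ((tY r).card : ℝ) / X.card * gaussEntropy N (sampleCov (tY r)) := by
    rw [← Finset.sum_fiberwise Finset.univ g
      (fun i => ((Y i).card : ℝ) / X.card * gaussEntropy N (sampleCov (Y i)))]
    refine Finset.sum_le_sum fun r _ => ?_
    have hblock := block_logdet hXc (Finset.univ.filter (fun i => g i = r)) Y (hfilterd r) hpd
    rw [← htY r] at hblock
    have hWsum : ∑ i ∈ Finset.univ.filter (fun i => g i = r), ((Y i).card : ℝ) / X.card
        = ((tY r).card : ℝ) / X.card := by
      rw [hcard_tY r, Finset.sum_div]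
    simp only [gaussEntropy]
    set K := (N : ℝ) / 2 * Real.log (2 * Real.pi * Real.exp 1) with hK
    have hexp : ∑ i ∈ Finset.univ.filter (fun i => g i = r),
        ((Y i).card : ℝ) / X.card * (K + 1 / 2 * Real.log (sampleCov (Y i)).det)
        = (∑ i ∈ Finset.univ.filter (fun i => g i = r), ((Y i).card : ℝ) / X.card) * K
          + 1 / 2 * ∑ i ∈ Finset.univ.filter (fun i => g i = r),
              ((Y i).card : ℝ) / X.card * Real.log (sampleCov (Y i)).det := by
      rw [Finset.sum_mul, Finset.mul_sum, ← Finset.sum_add_distrib]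
      exact Finset.sum_congr rfl fun i _ => by ring
    rw [hexp, hWsum]
    have h2 : ((tY r).card : ℝ) / X.card * (K + 1 / 2 * Real.log (sampleCov (tY r)).det)
        = ((tY r).card : ℝ) / X.card * K
          + 1 / 2 * (((tY r).card : ℝ) / X.card * Real.log (sampleCov (tY r)).det) := by
      ring
    rw [h2]
    linarith
  simp only [cecib, one_mul, ge_iff_le]
  linarith
end
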